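/- Let $k, r$ be positive integers with $k \geq 2$ and $r \leq k$, let $h \geq r + 2$ be an integer, and let $A$ be a set of integers with $|A| = k$. If $|h^{(\geq r)}A| = h(k-1) - r(r-1) + 1$, then $A$ is an arithmetic progression of integers. -/

import Mathlib

open Pointwise

/-- The generalized sumset `h^{(≥ r)}A`: elements expressible as a sum of `h` elements of `A`
(with repetition allowed) using at least `r` distinct elements of `A`. -/
def genSumset {G : Type*} [AddCommGroup G] [DecidableEq G] (h r : ℕ) (A : Finset G) : Set G :=
  {x | ∃ s : Multiset G, s.toFinset ⊆ A ∧ Multiset.card s = h ∧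
      r ≤ s.toFinset.card ∧ s.sum = x}

/-- The `h`-fold sumset `hA`: sums of `h` elements of `A` with repetition allowed
(with the convention `0A = {0}`). -/
def hfoldSumset {G : Type*} [AddCommGroup G] [DecidableEq G] (h : ℕ) (A : Finset G) : Set G :=
  {x | ∃ s : Multiset G, s.toFinset ⊆ A ∧ Multiset.card s = h ∧ s.sum = x}

/-- The `h`-fold restricted sumset `h^A`: sums of `h` pairwise distinct elements of `A`
(with the convention `0^A = {0}`). -/
def restrictedSumset {G : Type*} [AddCommGroup G] [DecidableEq G] (r : ℕ) (A : Finset G) : Set G :=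
  {x | ∃ s : Finset G, s ⊆ A ∧ s.card = r ∧ ∑ a ∈ s, a = x}

open Finset


lemma chain_mono (f : ℕ → ℤ) (N : ℕ) (hf : ∀ t < N, f t < f (t + 1)) :
    ∀ t ≤ N, ∀ s < t, f s < f t := by
  intro t ht
  induction t with
  | zero => omega
  | succ n ih =>
    intro s hs
    rcases Nat.lt_or_ge s n with h1 | h1
    · exact (ih (by omega) s h1).trans (hf n (by omega))
    · have : s = n := by omega
      subst this; exact hf s (by omega)

lemma exists_enum (A : Finset ℤ) (k : ℕ) (hA : A.card = k) :
    ∃ a : ℕ → ℤ, (∀ i j, i < j → j < k → a i < a j) ∧ A = (range k).image a := by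
  have hlen : (A.sort (· ≤ ·)).length = k := by rw [Finset.length_sort, hA]
  have hsort : (A.sort (· ≤ ·)).Pairwise (· < ·) := List.sortedLT_iff_pairwise.1 A.sortedLT_sort
  refine ⟨fun n => (A.sort (· ≤ ·)).getD n 0, ?_, ?_⟩
  · intro i j hij hj
    have hi' : i < (A.sort (· ≤ ·)).length := by omega
    have hj' : j < (A.sort (· ≤ ·)).length := by omega
    simp only [List.getD_eq_getElem _ 0 hi', List.getD_eq_getElem _ 0 hj']
    have := List.pairwise_iff_get.1 hsort ⟨i, hi'⟩ ⟨j, hj'⟩ hij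
    simpa using this
  · ext x
    rw [← A.mem_sort (· ≤ ·), mem_image]
    constructor
    · intro hx
      rcases List.mem_iff_getElem.1 hx with ⟨n, hn, rfl⟩
      exact ⟨n, mem_range.2 (by omega), List.getD_eq_getElem _ 0 hn⟩
    · rintro ⟨n, hn, rfl⟩
      have hn' : n < (A.sort (· ≤ ·)).length := by rw [hlen]; exact mem_range.1 hn
      rw [List.getD_eq_getElem _ 0 hn']
      exact List.getElem_mem _

lemma freiman_inverse (A : Finset ℤ) (k : ℕ) (hk : 2 ≤ k) (hA : A.card = k)
    (h2 : (A + A).card ≤ 2 * k - 1) :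
    ∃ a d : ℤ, 1 ≤ d ∧ A = Finset.image (fun i : ℕ => a + (i : ℤ) * d) (Finset.range k) := by
  obtain ⟨a, ha, himg⟩ := exists_enum A k hA
  have hmem : ∀ n, n < k → a n ∈ A := by
    intro n hn; rw [himg]; exact mem_image_of_mem a (mem_range.2 hn)
  set c : ℕ → ℤ := fun t => a (t / 2) + a ((t + 1) / 2) with hc
  have hstep : ∀ t < 2 * k - 2, c t < c (t + 1) := by
    intro t ht
    rcases Nat.even_or_odd t with ⟨i, hi⟩ | ⟨i, hi⟩
    · have e1 : t / 2 = i := by omega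
      have e2 : (t + 1) / 2 = i := by omega
      have e3 : (t + 2) / 2 = i + 1 := by omega
      simp only [hc, e1, e2, e3]
      exact add_lt_add_right (ha i (i + 1) (by omega) (by omega)) _
    · have e1 : t / 2 = i := by omega
      have e2 : (t + 1) / 2 = i + 1 := by omega
      have e3 : (t + 2) / 2 = i + 1 := by omega
      simp only [hc, e1, e2, e3]
      exact add_lt_add_left (ha i (i + 1) (by omega) (by omega)) _
  have hchain := chain_mono c (2 * k - 2) hstep
  have hcmem : ∀ t ≤ 2 * k - 2, c t ∈ A + A := by
    intro t ht
    exact add_mem_add (hmem _ (by omega)) (hmem _ (by omega))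
  have hinj : Set.InjOn c (range (2 * k - 1)) := by
    intro s hs t ht hst
    simp only [coe_range, Set.mem_Iio] at hs ht
    rcases Nat.lt_trichotomy s t with h1 | h1 | h1
    · exact absurd hst (ne_of_lt (hchain t (by omega) s h1))
    · exact h1
    · exact absurd hst (ne_of_gt (hchain s (by omega) t h1))
  have hsub : (range (2 * k - 1)).image c ⊆ A + A := by
    intro x hx
    rcases mem_image.1 hx with ⟨t, ht, rfl⟩
    exact hcmem t (by have := mem_range.1 ht; omega)
  have hcardim : ((range (2 * k - 1)).image c).card = 2 * k - 1 := by
    rw [card_image_of_injOn hinj, card_range]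
  have hAA : A + A = (range (2 * k - 1)).image c :=
    (eq_of_subset_of_card_le hsub (by rw [hcardim]; exact h2)).symm
  -- key: a(i-1) + a(i+1) = 2 * a i
  have hkey : ∀ j, j + 2 < k → a j + a (j + 2) = a (j + 1) + a (j + 1) := by
    intro j hjk
    set i : ℕ := j + 1 with hi
    have hi1 : 1 ≤ i := by omega
    have hik : i + 1 < k := by omega
    have eij : i - 1 = j := by omega
    have eij2 : i + 1 = j + 2 := by omega
    suffices hsf : a (i - 1) + a (i + 1) = a i + a i by
      rw [eij, eij2, hi] at hsf; exact hsf
    have hmemAA : a (i - 1) + a (i + 1) ∈ A + A :=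
      add_mem_add (hmem _ (by omega)) (hmem _ (by omega))
    rw [hAA] at hmemAA
    rcases mem_image.1 hmemAA with ⟨t, ht, hct⟩
    have ht' : t < 2 * k - 1 := mem_range.1 ht
    -- bounds
    have hlb : c (2 * i - 1) < c t := by
      rw [hct]
      have e1 : (2 * i - 1) / 2 = i - 1 := by omega
      have e2 : (2 * i - 1 + 1) / 2 = i := by omega
      simp only [hc, e1, e2]
      exact add_lt_add_right (ha i (i + 1) (by omega) hik) _
    have hub : c t < c (2 * i + 1) := by
      rw [hct]
      have e1 : (2 * i + 1) / 2 = i := by omega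
      have e2 : (2 * i + 1 + 1) / 2 = i + 1 := by omega
      simp only [hc, e1, e2]
      exact add_lt_add_left (ha (i - 1) i (by omega) (by omega)) _
    have htlb : 2 * i - 1 < t := by
      by_contra hcon
      push_neg at hcon
      rcases Nat.lt_or_ge t (2 * i - 1) with h1 | h1
      · exact absurd (hchain (2 * i - 1) (by omega) t h1) (by exact fun hh => absurd (hh.trans hlb) (lt_irrefl _))
      · have : t = 2 * i - 1 := by omega
        subst this; exact absurd hlb (lt_irrefl _)
    have htub : t < 2 * i + 1 := by
      by_contra hcon
      push_neg at hcon
      rcases Nat.lt_or_ge (2 * i + 1) t with h1 | h1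
      · exact absurd (hchain t (by omega) (2 * i + 1) h1) (by exact fun hh => absurd (hub.trans hh) (lt_irrefl _))
      · have : t = 2 * i + 1 := by omega
        subst this; exact absurd hub (lt_irrefl _)
    have : t = 2 * i := by omega
    subst this
    rw [← hct]
    have e1 : 2 * i / 2 = i := by omega
    have e2 : (2 * i + 1) / 2 = i := by omega
    simp only [hc, e1, e2]
  -- now conclude
  have h01 : a 0 < a 1 := ha 0 1 (by omega) (by omega)
  refine ⟨a 0, a 1 - a 0, by omega, ?_⟩
  have hval : ∀ i, i < k → a i = a 0 + (i : ℤ) * (a 1 - a 0) := by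
    intro i
    induction i using Nat.strong_induction_on with
    | _ i ih =>
      intro hik
      match i, hik with
      | 0, _ => simp
      | 1, _ => push_cast; ring
      | (j + 2), hik =>
        have hj1 := ih (j + 1) (by omega) (by omega)
        have hj := ih j (by omega) (by omega)
        have hk2 := hkey j (by omega)
        have : a (j + 2) = a (j + 1) + a (j + 1) - a j := by omega
        rw [this, hj1, hj]
        push_cast; ring
  rw [himg]
  apply image_congr
  intro i hi
  exact hval i (mem_range.1 hi)

lemma restricted_lb (A : Finset ℤ) (k r : ℕ) (hA : A.card = k) (hr1 : 1 ≤ r) (hrk : r ≤ k) :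
    r * (k - r) + 1 ≤ ((A.powersetCard r).image fun s => ∑ x ∈ s, x).card := by
  obtain ⟨a, ha, himg⟩ := exists_enum A k hA
  have hmem : ∀ n, n < k → a n ∈ A := by
    intro n hn; rw [himg]; exact mem_image_of_mem a (mem_range.2 hn)
  have haw : ∀ p q, p ≤ q → q < k → a p ≤ a q := by
    intro p q hpq hq
    rcases eq_or_lt_of_le hpq with rfl | h
    · exact le_refl _
    · exact (ha p q h hq).le
  set m := k - r with hm
  rcases Nat.eq_zero_or_pos m with hm0 | hm0
  · rw [hm0, Nat.mul_zero, Nat.zero_add]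
    rw [Nat.succ_le_iff, card_pos]
    exact Nonempty.image (Finset.powersetCard_nonempty.2 (hA ▸ hrk)) _
  -- m > 0 case
  set pos : ℕ → ℕ → ℕ := fun i j => i + min m (j - (r - 1 - i) * m) with hpos
  have hposlt : ∀ i j, i < r → pos i j < k := by
    intro i j hi
    have : pos i j ≤ i + m := by simp only [hpos]; omega
    omega
  have hposmono_i : ∀ i i' j, i < i' → pos i j < pos i' j := by
    intro i i' j hii
    have h1 : (r - 1 - i') * m ≤ (r - 1 - i) * m :=
      Nat.mul_le_mul_right m (by omega)
    have h2 : min m (j - (r - 1 - i) * m) ≤ min m (j - (r - 1 - i') * m) := by omega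
    simp only [hpos]; omega
  have hposmono_j : ∀ i j j', j ≤ j' → pos i j ≤ pos i j' := by
    intro i j j' hjj
    have : min m (j - (r - 1 - i) * m) ≤ min m (j' - (r - 1 - i) * m) := by omega
    simp only [hpos]; omega
  set v : ℕ → ℤ := fun j => ∑ i ∈ range r, a (pos i j) with hv
  have hstep : ∀ j < r * m, v j < v (j + 1) := by
    intro j hj
    apply Finset.sum_lt_sum
    · intro i hi
      exact haw _ _ (hposmono_j i j (j + 1) (by omega)) (hposlt i (j + 1) (mem_range.1 hi))
    · obtain ⟨q, u, hdm, hu, hq⟩ : ∃ q u, m * q + u = j ∧ u < m ∧ q < r :=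
        ⟨j / m, j % m, Nat.div_add_mod j m, Nat.mod_lt j hm0,
          (Nat.div_lt_iff_lt_mul hm0).2 hj⟩
      refine ⟨r - 1 - q, mem_range.2 (by omega), ?_⟩
      have hcomm : q * m = m * q := Nat.mul_comm q m
      have e0 : r - 1 - (r - 1 - q) = q := by omega
      have e1 : j - q * m = u := by omega
      have e2 : j + 1 - q * m = u + 1 := by omega
      apply ha
      · simp only [hpos, e0, e1, e2]
        omega
      · exact hposlt _ _ (by omega)
  have hchain := chain_mono v (r * m) hstep
  have hvmem : ∀ j ≤ r * m, v j ∈ (A.powersetCard r).image fun s => ∑ x ∈ s, x := by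
    intro j hj
    have hinjS : ∀ x ∈ range r, ∀ y ∈ range r, a (pos x j) = a (pos y j) → x = y := by
      intro x hx y hy hxy
      by_contra hne
      rcases Nat.lt_or_ge x y with h1 | h1
      · exact absurd hxy (ne_of_lt (ha _ _ (hposmono_i x y j h1) (hposlt y j (mem_range.1 hy))))
      · have h1' : y < x := by omega
        exact absurd hxy (ne_of_gt (ha _ _ (hposmono_i y x j h1') (hposlt x j (mem_range.1 hx))))
    refine mem_image.2 ⟨(range r).image (fun i => a (pos i j)), ?_, ?_⟩
    · rw [mem_powersetCard]
      constructor
      · intro x hx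
        rcases mem_image.1 hx with ⟨i, hi, rfl⟩
        exact hmem _ (hposlt i j (mem_range.1 hi))
      · rw [card_image_of_injOn hinjS, card_range]
    · rw [Finset.sum_image hinjS]
  have hvinj : Set.InjOn v (range (r * m + 1)) := by
    intro s hs t ht hst
    simp only [coe_range, Set.mem_Iio] at hs ht
    rcases Nat.lt_trichotomy s t with h1 | h1 | h1
    · exact absurd hst (ne_of_lt (hchain t (by omega) s h1))
    · exact h1
    · exact absurd hst (ne_of_gt (hchain s (by omega) t h1))
  calc r * m + 1 = ((range (r * m + 1)).image v).card := by
        rw [card_image_of_injOn hvinj, card_range]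
    _ ≤ _ := by
        apply card_le_card
        intro x hx
        rcases mem_image.1 hx with ⟨j, hj, rfl⟩
        exact hvmem j (by have := mem_range.1 hj; omega)

def hfold (A : Finset ℤ) : ℕ → Finset ℤ
  | 0 => {0}
  | n + 1 => A + hfold A n

lemma mem_hfold (A : Finset ℤ) (n : ℕ) (x : ℤ) :
    x ∈ hfold A n ↔ ∃ s : Multiset ℤ, s.toFinset ⊆ A ∧ Multiset.card s = n ∧ s.sum = x := by
  induction n generalizing x with
  | zero =>
    simp only [hfold, mem_singleton]
    constructor
    · rintro rfl
      exact ⟨0, by simp⟩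
    · rintro ⟨s, hs, hcard, rfl⟩
      rw [Multiset.card_eq_zero.1 hcard, Multiset.sum_zero]
  | succ n ih =>
    simp only [hfold, Finset.mem_add]
    constructor
    · rintro ⟨b, hb, c, hc, rfl⟩
      rcases (ih c).1 hc with ⟨t, ht, htc, rfl⟩
      refine ⟨b ::ₘ t, ?_, by simp [htc], by simp⟩
      intro y hy
      rw [Multiset.toFinset_cons, Finset.mem_insert] at hy
      rcases hy with rfl | hy
      · exact hb
      · exact ht hy
    · rintro ⟨s, hs, hcard, rfl⟩
      have hne : s ≠ 0 := by
        intro h0; rw [h0] at hcard; simp at hcard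
      rcases Multiset.exists_mem_of_ne_zero hne with ⟨b, hbmem⟩
      refine ⟨b, hs (Multiset.mem_toFinset.2 hbmem), (s.erase b).sum, ?_, ?_⟩
      · refine (ih _).2 ⟨s.erase b, ?_, ?_, rfl⟩
        · exact fun y hy => hs (Multiset.toFinset_subset.2 (Multiset.subset_of_le
            (Multiset.erase_le b s)) hy)
        · rw [Multiset.card_erase_of_mem hbmem, hcard]; rfl
      · rw [← Multiset.sum_cons, Multiset.cons_erase hbmem]

lemma hfold_nonempty (A : Finset ℤ) (hA : A.Nonempty) (n : ℕ) : (hfold A n).Nonempty := by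
  induction n with
  | zero => exact ⟨0, by simp [hfold]⟩
  | succ n ih => exact Finset.Nonempty.add hA ih

lemma hfold_two (A : Finset ℤ) : hfold A 2 = A + A := by
  have : hfold A 0 = {0} := rfl
  show A + (A + hfold A 0) = A + A
  rw [this]
  congr 1
  rw [Finset.add_singleton]
  simp

lemma hfold_card_ge (A : Finset ℤ) (hA : A.Nonempty) (e : ℕ) :
    e * (A.card - 1) + (A + A).card ≤ (hfold A (e + 2)).card := by
  induction e with
  | zero => simp [hfold_two]
  | succ e ih =>
    have hcd := cauchy_davenport_add_of_linearOrder_isCancelAdd hA (hfold_nonempty A hA (e + 2))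
    have h1 : 1 ≤ A.card := Finset.card_pos.2 hA
    have h2 : (hfold A (e + 1 + 2)).card = (A + hfold A (e + 2)).card := rfl
    have hAA : 1 ≤ (A + A).card := Finset.card_pos.2 (hA.add hA)
    rw [h2]
    have hsm : (e + 1) * (A.card - 1) = e * (A.card - 1) + (A.card - 1) :=
      Nat.succ_mul e _
    omega

lemma genSumset_decomp (h r : ℕ) (hrh : r ≤ h) (A : Finset ℤ) :
    genSumset h r A = ↑((A.powersetCard r).image (fun s => ∑ x ∈ s, x) + hfold A (h - r)) := by
  ext x
  simp only [genSumset, Set.mem_setOf_eq, Finset.coe_add, Set.mem_add, Finset.mem_coe,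
    Finset.mem_image, Finset.mem_powersetCard, mem_hfold]
  constructor
  · rintro ⟨s, hsA, hcard, hrcard, rfl⟩
    obtain ⟨u, hu, hucard⟩ := Finset.exists_subset_card_eq hrcard
    have huval : u.val ≤ s := le_trans (by exact_mod_cast Finset.val_le_iff.2 hu)
      (by rw [Multiset.toFinset_val]; exact s.dedup_le)
    refine ⟨∑ x ∈ u, x, ⟨u, ⟨fun y hy => hsA (hu hy), hucard⟩, rfl⟩,
      (s - u.val).sum, ⟨s - u.val, ?_, ?_, rfl⟩, ?_⟩
    · intro y hy
      exact hsA (Multiset.toFinset_subset.2 (Multiset.subset_of_le (tsub_le_self)) hy)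
    · have hcv : Multiset.card u.val = r := hucard
      rw [Multiset.card_sub huval, hcard, hcv]
    · have hsum : (∑ x ∈ u, x) = u.val.sum := by rw [Finset.sum, Multiset.map_id']
      have := tsub_add_cancel_of_le huval
      calc (∑ x ∈ u, x) + (s - u.val).sum = (u.val + (s - u.val)).sum := by
            rw [Multiset.sum_add, hsum]
        _ = s.sum := by rw [add_tsub_cancel_of_le huval]
  · rintro ⟨b, ⟨u, ⟨huA, hucard⟩, rfl⟩, c, ⟨t, htA, htcard, rfl⟩, rfl⟩
    refine ⟨u.val + t, ?_, ?_, ?_, ?_⟩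
    · rw [Multiset.toFinset_add]
      intro y hy
      rcases Finset.mem_union.1 hy with hy | hy
      · exact huA (by simpa using hy)
      · exact htA hy
    · rw [Multiset.card_add, htcard]
      have : Multiset.card u.val = r := hucard
      omega
    · rw [Multiset.toFinset_add]
      calc r = u.card := hucard.symm
        _ ≤ _ := Finset.card_le_card (by
            intro y hy
            exact Finset.mem_union_left _ (by simpa using hy))
    · rw [Multiset.sum_add]
      congr 1
      rw [Finset.sum, Multiset.map_id']


theorem genSumset_inverse_int (k r : ℕ) (hk : 2 ≤ k) (hr : 1 ≤ r) (hrk : r ≤ k)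
    (h : ℕ) (hh : r + 2 ≤ h) (A : Finset ℤ) (hA : A.card = k)
    (hcard : (genSumset h r A).ncard = h * (k - 1) - r * (r - 1) + 1) :
    ∃ a d : ℤ, 1 ≤ d ∧
      A = Finset.image (fun i : ℕ => a + (i : ℤ) * d) (Finset.range k) := by
  have hAne : A.Nonempty := Finset.card_pos.1 (by omega)
  have hdecomp := genSumset_decomp h r (by omega) A
  have hRHcard :
      ((A.powersetCard r).image (fun s => ∑ x ∈ s, x) + hfold A (h - r)).card =
        h * (k - 1) - r * (r - 1) + 1 := by
    rw [← Set.ncard_coe_finset, ← hdecomp]; exact hcard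
  have hRlb := restricted_lb A k r hA hr hrk
  have hHlb : (h - r - 2) * (k - 1) + (A + A).card ≤ (hfold A (h - r)).card := by
    have hfc := hfold_card_ge A hAne (h - r - 2)
    rw [hA] at hfc
    have heq : h - r - 2 + 2 = h - r := by omega
    rw [heq] at hfc
    exact hfc
  have hAAlb : A.card + A.card - 1 ≤ (A + A).card :=
    cauchy_davenport_add_of_linearOrder_isCancelAdd hAne hAne
  have hRne : ((A.powersetCard r).image (fun s => ∑ x ∈ s, x)).Nonempty :=
    Finset.card_pos.1 (by omega)
  have hHne : (hfold A (h - r)).Nonempty := hfold_nonempty A hAne _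
  have hCD := cauchy_davenport_add_of_linearOrder_isCancelAdd hRne hHne
  have hid : h * (k - 1) =
      (h - r - 2) * (k - 1) + (r * (r - 1) + r * (k - r) + (2 * k - 2)) := by
    obtain ⟨m, rfl⟩ : ∃ m, k = r + m := ⟨k - r, by omega⟩
    obtain ⟨s, rfl⟩ : ∃ s, r = s + 1 := ⟨r - 1, by omega⟩
    obtain ⟨e, rfl⟩ : ∃ e, h = s + 1 + 2 + e := ⟨h - (s + 1) - 2, by omega⟩
    have e1 : s + 1 + m - 1 = s + m := by omega
    have e2 : s + 1 + 2 + e - (s + 1) - 2 = e := by omega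
    have e3 : s + 1 - 1 = s := by omega
    have e4 : s + 1 + m - (s + 1) = m := by omega
    have e5 : 2 * (s + 1 + m) - 2 = 2 * s + 2 * m := by omega
    rw [e1, e2, e3, e4, e5]
    ring
  have h2AA : (A + A).card ≤ 2 * k - 1 := by
    rw [hA] at hAAlb
    set P1 := h * (k - 1) with hP1
    set P2 := (h - r - 2) * (k - 1) with hP2
    set P3 := r * (r - 1) with hP3
    set P4 := r * (k - r) with hP4
    omega
  exact freiman_inverse A k hk hA h2AA
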